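/- Let N : ℝ₊ → ℝ₊ be a non-decreasing function with N(t) = 0 for 0 ≤ t < ε for some ε > 0, and suppose I(r) = (1/r)∫₀^r N(t)/t dt converges to a limit L as r → ∞. Then N(r) = r(L + o(1)) as r → ∞, i.e. N(r)/r → L. -/

import Mathlib

open MeasureTheory Filter Topology

set_option maxHeartbeats 1000000 in
/-- Tauberian lemma (Levin, Lemma II.4.3): if `N` is non-decreasing and non-negative on
`ℝ₊`, vanishes near `0`, and `I(r) = (1/r)∫₀^r N(t)/t dt → L` as `r → ∞`, then
`N(r)/r → L`. -/
theorem stmt_11 (N : ℝ → ℝ) (hmono : MonotoneOn N (Set.Ici 0))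
    (hpos : ∀ t : ℝ, 0 ≤ t → 0 ≤ N t)
    (ε : ℝ) (hε : 0 < ε) (hzero : ∀ t : ℝ, 0 ≤ t → t < ε → N t = 0)
    (L : ℝ)
    (hI : Tendsto (fun r : ℝ => (1 / r) * ∫ t in (0:ℝ)..r, N t / t) atTop (nhds L)) :
    Tendsto (fun r : ℝ => N r / r) atTop (nhds L) := by
  set f : ℝ → ℝ := fun t => N t / t with hfdef
  set I : ℝ → ℝ := fun r => (1 / r) * ∫ t in (0:ℝ)..r, f t with hIdef
  clear_value I
  -- measurability
  have hmonoAux : Monotone (fun t : ℝ => N (max t 0)) := fun a b hab =>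
    hmono (le_max_right a 0) (le_max_right b 0) (max_le_max hab le_rfl)
  have hfm : Measurable fun t : ℝ => N (max t 0) / t :=
    hmonoAux.measurable.div measurable_id
  have hf_nonneg : ∀ t : ℝ, 0 ≤ t → 0 ≤ f t := fun t ht => div_nonneg (hpos t ht) ht
  -- interval integrability on [0, r]
  have hInt : ∀ r : ℝ, 0 ≤ r → IntervalIntegrable f volume 0 r := by
    intro r hr
    rw [intervalIntegrable_iff, Set.uIoc_of_le hr]
    have hrε : (0:ℝ) ≤ max r ε := le_trans hε.le (le_max_right _ _)
    have hC : 0 ≤ N (max r ε) / ε := div_nonneg (hpos _ hrε) hε.le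
    apply Integrable.mono' (integrable_const (N (max r ε) / ε))
    · refine hfm.aestronglyMeasurable.restrict.congr ?_
      filter_upwards [ae_restrict_mem measurableSet_Ioc] with t ht
      rw [max_eq_left ht.1.le]
    · filter_upwards [ae_restrict_mem measurableSet_Ioc] with t ht
      rw [Real.norm_eq_abs, abs_of_nonneg (hf_nonneg t ht.1.le)]
      rcases lt_or_ge t ε with h | h
      · simp only [hfdef, hzero t ht.1.le h, zero_div]
        exact hC
      · exact div_le_div₀ (hpos _ hrε)
          (hmono ht.1.le hrε (le_trans ht.2 (le_max_left _ _))) hε h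
  have hIntSub : ∀ r s : ℝ, 0 ≤ r → r ≤ s →
      (∫ t in r..s, f t) = (∫ t in (0:ℝ)..s, f t) - ∫ t in (0:ℝ)..r, f t := by
    intro r s hr hrs
    rw [_root_.intervalIntegral.integral_interval_sub_left (hInt s (hr.trans hrs)) (hInt r hr)]
  have hIntOn : ∀ r s : ℝ, 0 ≤ r → r ≤ s → IntervalIntegrable f volume r s := by
    intro r s hr hrs
    apply (hInt s (hr.trans hrs)).mono_set
    rw [Set.uIcc_of_le hrs, Set.uIcc_of_le (hr.trans hrs)]
    exact Set.Icc_subset_Icc hr le_rfl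
  -- key comparison lemmas
  have key1 : ∀ r s : ℝ, 0 < r → r ≤ s → N r * Real.log (s / r) ≤ ∫ t in r..s, f t := by
    intro r s hr hrs
    have h0 : (0:ℝ) ∉ Set.uIcc r s := by
      rw [Set.uIcc_of_le hrs]
      intro h
      exact absurd h.1 (not_le.2 hr)
    have hcont : ContinuousOn (fun t : ℝ => N r * t⁻¹) (Set.uIcc r s) :=
      continuousOn_const.mul (continuousOn_inv₀.mono (by
        intro x hx
        simp only [Set.mem_compl_iff, Set.mem_singleton_iff]
        intro h
        exact h0 (h ▸ hx)))
    have h1 : (∫ t in r..s, N r * t⁻¹) ≤ ∫ t in r..s, f t := by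
      apply _root_.intervalIntegral.integral_mono_on hrs (hcont.intervalIntegrable) (hIntOn r s hr.le hrs)
      intro t ht
      have ht0 : 0 < t := lt_of_lt_of_le hr ht.1
      show N r * t⁻¹ ≤ N t / t
      calc N r * t⁻¹ = N r / t := (div_eq_mul_inv _ _).symm
        _ ≤ N t / t := (div_le_div_iff_of_pos_right ht0).2 (hmono hr.le (hr.le.trans ht.1) ht.1)
    calc N r * Real.log (s / r) = ∫ t in r..s, N r * t⁻¹ := by
          rw [_root_.intervalIntegral.integral_const_mul, _root_.integral_inv h0]
      _ ≤ _ := h1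
  have key2 : ∀ r s : ℝ, 0 < r → r ≤ s → (∫ t in r..s, f t) ≤ N s * Real.log (s / r) := by
    intro r s hr hrs
    have h0 : (0:ℝ) ∉ Set.uIcc r s := by
      rw [Set.uIcc_of_le hrs]
      intro h
      exact absurd h.1 (not_le.2 hr)
    have hcont : ContinuousOn (fun t : ℝ => N s * t⁻¹) (Set.uIcc r s) :=
      continuousOn_const.mul (continuousOn_inv₀.mono (by
        intro x hx
        simp only [Set.mem_compl_iff, Set.mem_singleton_iff]
        intro h
        exact h0 (h ▸ hx)))
    have h1 : (∫ t in r..s, f t) ≤ ∫ t in r..s, N s * t⁻¹ := by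
      apply _root_.intervalIntegral.integral_mono_on hrs (hIntOn r s hr.le hrs) hcont.intervalIntegrable
      intro t ht
      have ht0 : 0 < t := lt_of_lt_of_le hr ht.1
      show N t / t ≤ N s * t⁻¹
      calc N t / t ≤ N s / t :=
            (div_le_div_iff_of_pos_right ht0).2 (hmono (hr.le.trans ht.1) (hr.le.trans hrs) ht.2)
        _ = N s * t⁻¹ := div_eq_mul_inv _ _
    calc (∫ t in r..s, f t) ≤ ∫ t in r..s, N s * t⁻¹ := h1
      _ = N s * Real.log (s / r) := by
          rw [_root_.intervalIntegral.integral_const_mul, _root_.integral_inv h0]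
  -- L is nonnegative
  have hL0 : 0 ≤ L := by
    refine ge_of_tendsto hI ?_
    filter_upwards [eventually_ge_atTop (1:ℝ)] with r hr
    have hr0 : (0:ℝ) ≤ r := le_trans zero_le_one hr
    have : 0 ≤ ∫ t in (0:ℝ)..r, f t :=
      _root_.intervalIntegral.integral_nonneg hr0 (fun t ht => hf_nonneg t ht.1)
    rw [hIdef]
    positivity
  -- main argument
  rw [Metric.tendsto_nhds]
  intro δ hδ
  set k : ℝ := 1 + δ / (4 * (L + 1)) with hkdef
  clear_value k
  have hL1 : (0:ℝ) < L + 1 := by linarith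
  have hk1 : 1 < k := by
    have : 0 < δ / (4 * (L + 1)) := by positivity
    linarith
  have hk0 : (0:ℝ) < k := lt_trans zero_lt_one hk1
  have hlogk : 0 < Real.log k := Real.log_pos hk1
  have hlog_le : Real.log k ≤ k - 1 := Real.log_le_sub_one_of_pos hk0
  have hlog_ge : (k - 1) / k ≤ Real.log k := by
    have h := Real.log_le_sub_one_of_pos (show (0:ℝ) < k⁻¹ by positivity)
    rw [Real.log_inv] at h
    have hk' : (k - 1) / k = 1 - k⁻¹ := by field_simp
    linarith
  have hkm1 : k * L ≤ L + δ / 4 := by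
    have h1 : δ / (4 * (L + 1)) * L ≤ δ / (4 * (L + 1)) * (L + 1) := by
      have : (0:ℝ) ≤ δ / (4 * (L + 1)) := by positivity
      nlinarith
    have h2 : δ / (4 * (L + 1)) * (L + 1) = δ / 4 := by field_simp
    nlinarith
  have hkm2 : L - δ / 4 ≤ L / k := by
    have h1 : L - L / k = L * (k - 1) / k := by field_simp
    have h2 : L * (k - 1) / k ≤ L * (k - 1) := by
      rw [div_le_iff₀ hk0]
      nlinarith [mul_nonneg hL0 (by linarith : (0:ℝ) ≤ k - 1)]
    have h3 : L * (k - 1) = L * (δ / (4 * (L + 1))) := by rw [hkdef]; ring_nf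
    have h4 : L * (δ / (4 * (L + 1))) ≤ δ / 4 := by
      have h5 : L * (δ / (4 * (L + 1))) ≤ (L + 1) * (δ / (4 * (L + 1))) := by
        have : (0:ℝ) ≤ δ / (4 * (L + 1)) := by positivity
        nlinarith
      have h6 : (L + 1) * (δ / (4 * (L + 1))) = δ / 4 := by field_simp
      linarith
    linarith
  -- limits
  have htks : Tendsto (fun r : ℝ => k * r) atTop atTop :=
    Tendsto.const_mul_atTop hk0 tendsto_id
  have htdiv : Tendsto (fun r : ℝ => r / k) atTop atTop :=
    tendsto_id.atTop_div_const hk0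
  have hA : Tendsto (fun r : ℝ => k * I (k * r) - I r) atTop (nhds (k * L - L)) :=
    ((hI.comp htks).const_mul k).sub hI
  have hB : Tendsto (fun r : ℝ => I r - (1 / k) * I (r / k)) atTop
      (nhds (L - (1 / k) * L)) :=
    hI.sub ((hI.comp htdiv).const_mul (1 / k))
  have hAev : ∀ᶠ r in atTop, k * I (k * r) - I r < (k * L - L) + Real.log k * (δ / 4) := by
    apply hA.eventually_lt_const
    nlinarith
  have hBev : ∀ᶠ r in atTop, (L - (1 / k) * L) - Real.log k * (δ / 4)
      < I r - (1 / k) * I (r / k) := by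
    apply hB.eventually_const_lt
    nlinarith
  filter_upwards [hAev, hBev, eventually_gt_atTop (0:ℝ)] with r hA' hB' hr0
  have hrne : r ≠ 0 := ne_of_gt hr0
  have hkne : k ≠ 0 := ne_of_gt hk0
  -- upper bound
  have hkr : r ≤ k * r := by nlinarith
  have e1 : N r * Real.log k ≤ ∫ t in r..(k * r), f t := by
    have h := key1 r (k * r) hr0 hkr
    rwa [show k * r / r = k by field_simp] at h
  have e2 : (∫ t in r..(k * r), f t) = r * (k * I (k * r) - I r) := by
    rw [hIntSub r (k * r) hr0.le hkr]
    simp only [hIdef]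
    field_simp
  have up0 : N r * Real.log k ≤ r * (k * I (k * r) - I r) := e2 ▸ e1
  have up1 : N r / r ≤ (k * I (k * r) - I r) / Real.log k := by
    rw [div_le_div_iff₀ hr0 hlogk]
    linarith [up0]
  have up2 : (k * I (k * r) - I r) / Real.log k
      < ((k - 1) * L + Real.log k * (δ / 4)) / Real.log k := by
    apply (div_lt_div_iff_of_pos_right hlogk).2
    linarith
  have up3 : ((k - 1) * L + Real.log k * (δ / 4)) / Real.log k
      = (k - 1) * L / Real.log k + δ / 4 := by
    field_simp
  have up4 : (k - 1) * L / Real.log k ≤ k * L := by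
    have ha : 0 ≤ (k - 1) * L := mul_nonneg (by linarith) hL0
    have hb : 0 < (k - 1) / k := div_pos (by linarith) hk0
    calc (k - 1) * L / Real.log k ≤ (k - 1) * L / ((k - 1) / k) :=
          div_le_div_of_nonneg_left ha hb hlog_ge
      _ = k * L := by
          have hkm0 : k - 1 ≠ 0 := ne_of_gt (by linarith)
          field_simp
  have hupper : N r / r < L + δ / 2 := by
    have := up1.trans_lt up2
    rw [up3] at this
    linarith
  -- lower bound
  have hrk : r / k ≤ r := div_le_self hr0.le hk1.le
  have hrk0 : 0 < r / k := div_pos hr0 hk0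
  have e1' : (∫ t in (r/k)..r, f t) ≤ N r * Real.log k := by
    have h := key2 (r / k) r hrk0 hrk
    rwa [show r / (r / k) = k by field_simp] at h
  have e2' : (∫ t in (r/k)..r, f t) = r * (I r - (1 / k) * I (r / k)) := by
    rw [hIntSub (r / k) r hrk0.le hrk]
    simp only [hIdef]
    field_simp
    try ring
  have low0 : r * (I r - (1 / k) * I (r / k)) ≤ N r * Real.log k := e2' ▸ e1'
  have low1 : (I r - (1 / k) * I (r / k)) / Real.log k ≤ N r / r := by
    rw [div_le_div_iff₀ hlogk hr0]
    linarith
  have low2 : ((L - (1 / k) * L) - Real.log k * (δ / 4)) / Real.log k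
      < (I r - (1 / k) * I (r / k)) / Real.log k :=
    (div_lt_div_iff_of_pos_right hlogk).2 hB'
  have low3 : ((L - (1 / k) * L) - Real.log k * (δ / 4)) / Real.log k
      = (L - (1 / k) * L) / Real.log k - δ / 4 := by
    field_simp
  have low4 : L / k ≤ (L - (1 / k) * L) / Real.log k := by
    have ha : 0 ≤ L - (1 / k) * L := by
      have : (1 / k) * L ≤ 1 * L := by
        apply mul_le_mul_of_nonneg_right _ hL0
        rw [div_le_one hk0]
        linarith
      linarith
    calc L / k = (L - (1 / k) * L) / (k - 1) := by
          rw [eq_div_iff (by linarith : k - (1:ℝ) ≠ 0)]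
          field_simp
      _ ≤ (L - (1 / k) * L) / Real.log k :=
          div_le_div_of_nonneg_left ha hlogk hlog_le
  have hlower : L - δ / 2 < N r / r := by
    have h := low2.trans_le low1
    rw [low3] at h
    linarith
  rw [Real.dist_eq, abs_lt]
  constructor <;> linarith
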